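/- arXiv:1009.3972 — 12 statements merged into one kernel-verified Lean document; each statement's English description precedes it below -/
import Mathlib

section
/- Let G be a group equipped with a topology such that inversion is continuous and multiplication is continuous in each variable separately (a quasitopological group). Let c(G) denote G with the quotient topology induced by the multiplication map μ : G × G → G. Then c(G) is again a quasitopological group: inversion and all left and right translations on c(G) are continuous. -/
/-- A quasitopological group: inversion continuous, multiplication separately continuous. -/
def IsQuasiTopologicalGroup {G : Type*} [Group G] (t : TopologicalSpace G) : Prop :=
  @Continuous G G t t (fun x => x⁻¹) ∧
    (∀ g : G, @Continuous G G t t (fun x => g * x)) ∧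
    (∀ g : G, @Continuous G G t t (fun x => x * g))

/-- The quotient topology coinduced by multiplication `μ : G × G → G`. -/
def cTop {G : Type*} [Group G] (t : TopologicalSpace G) : TopologicalSpace G :=
  TopologicalSpace.coinduced (fun p : G × G => p.1 * p.2)
    (@instTopologicalSpaceProd G G t t)

/-- `s` is the finest group topology coarser than `t`. -/
def IsTau {G : Type*} [Group G] (t s : TopologicalSpace G) : Prop :=
  t ≤ s ∧ @IsTopologicalGroup G s _ ∧
    ∀ s' : TopologicalSpace G, t ≤ s' → @IsTopologicalGroup G s' _ → s ≤ s'

/-- `c(G)` is again a quasitopological group. -/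
theorem cTop_isQuasiTopologicalGroup {G : Type*} [Group G] (t : TopologicalSpace G)
    (h : IsQuasiTopologicalGroup t) :
    IsQuasiTopologicalGroup (cTop t) := by
  letI := t
  obtain ⟨hinv, hl, hr⟩ := h
  have hμ : @Continuous (G × G) G _ (cTop t) (fun p : G × G => p.1 * p.2) :=
    continuous_coinduced_rng
  refine ⟨?_, ?_, ?_⟩
  · show @Continuous G G (cTop t) (cTop t) _
    rw [cTop, continuous_coinduced_dom]
    have heq : ((fun x : G => x⁻¹) ∘ fun p : G × G => p.1 * p.2) =
        (fun p : G × G => p.1 * p.2) ∘ fun p : G × G => (p.2⁻¹, p.1⁻¹) := by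
      funext p; simp [mul_inv_rev]
    rw [heq]
    exact @Continuous.comp (G × G) (G × G) G _ _ (cTop t) _ _ hμ ((hinv.comp continuous_snd).prodMk (hinv.comp continuous_fst))
  · intro g
    show @Continuous G G (cTop t) (cTop t) _
    rw [cTop, continuous_coinduced_dom]
    have heq : ((fun x : G => g * x) ∘ fun p : G × G => p.1 * p.2) =
        (fun p : G × G => p.1 * p.2) ∘ fun p : G × G => (g * p.1, p.2) := by
      funext p; simp [mul_assoc]
    rw [heq]
    exact @Continuous.comp (G × G) (G × G) G _ _ (cTop t) _ _ hμ (((hl g).comp continuous_fst).prodMk continuous_snd)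
  · intro g
    show @Continuous G G (cTop t) (cTop t) _
    rw [cTop, continuous_coinduced_dom]
    have heq : ((fun x : G => x * g) ∘ fun p : G × G => p.1 * p.2) =
        (fun p : G × G => p.1 * p.2) ∘ fun p : G × G => (p.1, p.2 * g) := by
      funext p; simp [mul_assoc]
    rw [heq]
    exact @Continuous.comp (G × G) (G × G) G _ _ (cTop t) _ _ hμ (continuous_fst.prodMk ((hr g).comp continuous_snd))
end

section
/- A quasitopological group G is a topological group if and only if the topology of G equals the quotient topology on G induced by the multiplication map μ : G × G → G. -/
/-- A quasitopological group is a topological group iff its topology equals the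
quotient topology induced by multiplication. -/
theorem topologicalGroup_iff_eq_cTop {G : Type*} [Group G] (t : TopologicalSpace G)
    (h : IsQuasiTopologicalGroup t) :
    @IsTopologicalGroup G t _ ↔ t = cTop t := by
  have hle : t ≤ cTop t := by
    rw [← @continuous_id_iff_le G t (cTop t)]
    have hsec : @Continuous G (G × G) t (@instTopologicalSpaceProd G G t t)
        (fun x => ((1 : G), x)) :=
      @Continuous.prodMk G G G t t t _ _ (@continuous_const G G t t 1) (@continuous_id G t)
    have hmu : @Continuous (G × G) G (@instTopologicalSpaceProd G G t t) (cTop t)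
        (fun p : G × G => p.1 * p.2) := continuous_coinduced_rng
    have : @Continuous G G t (cTop t) (fun x => (1 : G) * x) :=
      @Continuous.comp G (G × G) G t (@instTopologicalSpaceProd G G t t) (cTop t) _ _ hmu hsec
    exact (by simpa using this : @Continuous G G t (cTop t) (fun x => x))
  constructor
  · intro hg
    refine le_antisymm hle ?_
    exact continuous_iff_coinduced_le.mp (@continuous_mul G t _ hg.toContinuousMul)
  · intro heq
    letI := t
    exact { continuous_mul := by
              rw [continuous_iff_coinduced_le]
              exact le_of_eq heq.symm,
            continuous_inv := h.1 }
end

section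
/- Let G be a quasitopological group, let H be an open subgroup of G, and let μ : G × G → G be multiplication. Then μ⁻¹(H) is open in G × G; consequently H is open in the quotient topology c(G) induced by μ. -/
/-- For an open subgroup `H` of a quasitopological group `G`, `μ⁻¹(H)` is open in
`G × G` and hence `H` is open in the quotient topology `c(G)`. -/
theorem openSubgroup_cTop {G : Type*} [Group G] (t : TopologicalSpace G)
    (h : IsQuasiTopologicalGroup t) (H : Subgroup G) (hH : t.IsOpen (H : Set G)) :
    (@instTopologicalSpaceProd G G t t).IsOpen
        ((fun p : G × G => p.1 * p.2) ⁻¹' (H : Set G)) ∧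
      (cTop t).IsOpen (H : Set G) := by
  letI := t
  have key : (fun p : G × G => p.1 * p.2) ⁻¹' (H : Set G) =
      ⋃ (p : G × G) (_ : p.1 * p.2 ∈ H),
        ((fun x => x * p.2) ⁻¹' (H : Set G)) ×ˢ ((fun x => p.1 * x) ⁻¹' (H : Set G)) := by
    ext ⟨x, y⟩
    simp only [Set.mem_preimage, Set.mem_iUnion, Set.mem_prod, SetLike.mem_coe]
    constructor
    · intro hxy
      exact ⟨(x, y), hxy, hxy, hxy⟩
    · rintro ⟨⟨a, b⟩, hab, hx, hy⟩
      have : (x * b) * (a * b)⁻¹ * (a * y) ∈ H := mul_mem (mul_mem hx (inv_mem hab)) hy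
      simpa [mul_assoc, mul_inv_rev] using this
  have h1 : (@instTopologicalSpaceProd G G t t).IsOpen
      ((fun p : G × G => p.1 * p.2) ⁻¹' (H : Set G)) := by
    rw [key]
    exact isOpen_iUnion fun p => isOpen_iUnion fun _ =>
      ((h.2.2 p.2).isOpen_preimage _ hH).prod ((h.2.1 p.1).isOpen_preimage _ hH)
  exact ⟨h1, h1⟩
end

section
/- The reflection τ from groups-with-topology to topological groups preserves finite products: for groups with topology G and H, the identity map τ(G × H) → τ(G) × τ(H) is an isomorphism of topological groups, where G × H carries the product topology. -/
/-- Auxiliary: `a ↦ (a, c)` is continuous. -/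
lemma aux_incl_left {G H : Type*} [One H] [TopologicalSpace G] [TopologicalSpace H] :
    Continuous (fun a : G => ((a, 1) : G × H)) :=
  continuous_id.prodMk continuous_const

/-- Auxiliary: `b ↦ (c, b)` is continuous. -/
lemma aux_incl_right {G H : Type*} [One G] [TopologicalSpace G] [TopologicalSpace H] :
    Continuous (fun b : H => ((1, b) : G × H)) :=
  continuous_const.prodMk continuous_id

/-- `τ` preserves finite products: `τ(G × H)` equals `τ(G) × τ(H)` (so the identity
is an isomorphism of topological groups). -/
theorem tau_prod {G H : Type*} [Group G] [Group H]
    (tG : TopologicalSpace G) (tH : TopologicalSpace H)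
    (τG : TopologicalSpace G) (τH : TopologicalSpace H)
    (τP : TopologicalSpace (G × H))
    (hG : IsTau tG τG) (hH : IsTau tH τH)
    (hP : IsTau (@instTopologicalSpaceProd G H tG tH) τP) :
    τP = @instTopologicalSpaceProd G H τG τH := by
  obtain ⟨hleP, hgrpP, hminP⟩ := hP
  obtain ⟨hleG, hgrpG, hminG⟩ := hG
  obtain ⟨hleH, hgrpH, hminH⟩ := hH
  -- the identity (G×H, tG×tH) → (G×H, τP) is continuous
  have hidP : @Continuous (G × H) (G × H) (@instTopologicalSpaceProd G H tG tH) τP id :=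
    continuous_id_of_le hleP
  apply le_antisymm
  · -- τP ≤ τG × τH : the product of the τ's is a group topology coarser than tG × tH
    refine hminP _ (inf_le_inf (induced_mono hleG) (induced_mono hleH)) ?_
    letI := τG; letI := τH; letI := hgrpG; letI := hgrpH
    infer_instance
  · -- τG × τH ≤ τP
    -- the inclusion a ↦ (a, 1) is continuous from (G, τG) to (G×H, τP)
    have h1 : @Continuous G (G × H) tG τP (fun a => ((a, 1) : G × H)) :=
      @Continuous.comp G (G × H) (G × H) tG (@instTopologicalSpaceProd G H tG tH) τP
        _ _ hidP (@aux_incl_left G H _ tG tH)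
    have h2 : @Continuous H (G × H) tH τP (fun b => ((1, b) : G × H)) :=
      @Continuous.comp H (G × H) (G × H) tH (@instTopologicalSpaceProd G H tG tH) τP
        _ _ hidP (@aux_incl_right G H _ tG tH)
    have hι : @Continuous G (G × H) τG τP (fun a => ((a, 1) : G × H)) := by
      rw [continuous_iff_le_induced]
      refine hminG _ (continuous_iff_le_induced.mp h1) ?_
      letI := τP; letI := hgrpP
      exact topologicalGroup_induced (MonoidHom.inl G H)
    have hκ : @Continuous H (G × H) τH τP (fun b => ((1, b) : G × H)) := by
      rw [continuous_iff_le_induced]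
      refine hminH _ (continuous_iff_le_induced.mp h2) ?_
      letI := τP; letI := hgrpP
      exact topologicalGroup_induced (MonoidHom.inr G H)
    have key : @Continuous (G × H) (G × H) (@instTopologicalSpaceProd G H τG τH) τP
        (fun p => ((p.1, 1) : G × H) * (1, p.2)) :=
      @Continuous.mul (G × H) τP _ hgrpP.toContinuousMul (G × H)
        (@instTopologicalSpaceProd G H τG τH) _ _
        (@Continuous.comp (G × H) G (G × H) (@instTopologicalSpaceProd G H τG τH) τG τP
          _ _ hι (@continuous_fst G H τG τH))
        (@Continuous.comp (G × H) H (G × H) (@instTopologicalSpaceProd G H τG τH) τH τP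
          _ _ hκ (@continuous_snd G H τG τH))
    have heq : (fun p : G × H => ((p.1, 1) : G × H) * (1, p.2)) = id := by
      funext p; simp [Prod.ext_iff]
    rw [heq] at key
    exact continuous_id_iff_le.mp key
end

section
/- If f : G → H is a group homomorphism between groups with topology that is also a topological quotient map, then τ(f) : τ(G) → τ(H) is a topological quotient map. -/
theorem topologicalGroup_coinduced_surj {G H : Type*} [Group G] [Group H]
    (t : TopologicalSpace G) (ht : @IsTopologicalGroup G t _) (f : G →* H)
    (hsurj : Function.Surjective f) :
    @IsTopologicalGroup H (t.coinduced f) _ := by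
  letI := t
  haveI := ht
  let e := QuotientGroup.quotientKerEquivOfSurjective f hsurj
  have hfac : (f : G → H) = e ∘ QuotientGroup.mk := by
    funext g; rfl
  have h1 : t.coinduced f =
      TopologicalSpace.coinduced e (instTopologicalSpaceQuotient) := by
    rw [hfac, ← coinduced_compose]; rfl
  have h2 : TopologicalSpace.coinduced (e : G ⧸ f.ker ≃ H) instTopologicalSpaceQuotient
      = TopologicalSpace.induced ((e : G ⧸ f.ker ≃ H).symm) instTopologicalSpaceQuotient := by
    rw [← Equiv.induced_symm]
  rw [h1]
  have h3 : (e : G ⧸ f.ker ≃ H) = (e : G ⧸ f.ker → H) := rfl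
  rw [← h3, h2]
  exact topologicalGroup_induced (e.symm : H →* G ⧸ f.ker)


/-- If `f : G → H` is a homomorphism of groups with topology which is a topological
quotient map, then `τ(f) : τ(G) → τ(H)` is a topological quotient map. -/
theorem tau_quotientMap {G H : Type*} [Group G] [Group H]
    (tG : TopologicalSpace G) (tH : TopologicalSpace H)
    (τG : TopologicalSpace G) (τH : TopologicalSpace H)
    (hG : IsTau tG τG) (hH : IsTau tH τH)
    (f : G →* H) (hsurj : Function.Surjective f)
    (hq : tH = tG.coinduced f) :
    Function.Surjective f ∧ @Continuous G H τG τH f ∧ τH = τG.coinduced f := by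
  obtain ⟨hle, hgrp, hmin⟩ := hG
  obtain ⟨hleH, hgrpH, hminH⟩ := hH
  have hcgrp : @IsTopologicalGroup H (τG.coinduced f) _ :=
    topologicalGroup_coinduced_surj τG hgrp f hsurj
  have htHle : tH ≤ τG.coinduced f := by
    rw [hq]; exact coinduced_mono hle
  have hτHle : τH ≤ τG.coinduced f := hminH _ htHle hcgrp
  have hindgrp : @IsTopologicalGroup G (TopologicalSpace.induced f τH) _ := by
    letI := τH; haveI := hgrpH
    exact topologicalGroup_induced f
  have htGle : tG ≤ TopologicalSpace.induced f τH := by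
    rw [← coinduced_le_iff_le_induced, ← hq]; exact hleH
  have hτGle : τG ≤ TopologicalSpace.induced f τH := hmin _ htGle hindgrp
  have hcle : τG.coinduced f ≤ τH := coinduced_le_iff_le_induced.mpr hτGle
  exact ⟨hsurj, continuous_iff_coinduced_le.mpr hcle, le_antisymm hτHle hcle⟩
end

section
/- If G is a quasitopological group, then G and τ(G) have the same open subgroups. -/
section Aux

variable {G : Type*} [Group G]

/-- The conjugate subgroup `g K g⁻¹`, described as `{x | g⁻¹ x g ∈ K}`. -/
def conjSub (g : G) (K : Subgroup G) : Subgroup G where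
  carrier := {x | g⁻¹ * x * g ∈ K}
  one_mem' := by simpa using K.one_mem
  mul_mem' := by
    intro a b ha hb
    have : g⁻¹ * (a * b) * g = (g⁻¹ * a * g) * (g⁻¹ * b * g) := by group
    simpa [Set.mem_setOf_eq, this] using K.mul_mem ha hb
  inv_mem' := by
    intro a ha
    have : g⁻¹ * a⁻¹ * g = (g⁻¹ * a * g)⁻¹ := by group
    simpa [Set.mem_setOf_eq, this] using K.inv_mem ha

lemma mem_conjSub {g x : G} {K : Subgroup G} : x ∈ conjSub g K ↔ g⁻¹ * x * g ∈ K := Iff.rfl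

/-- Closure of `{H}` under conjugation and pairwise intersection. -/
inductive CC (H : Subgroup G) : Subgroup G → Prop
  | base : CC H H
  | conj (g : G) (K : Subgroup G) : CC H K → CC H (conjSub g K)
  | inter (K₁ K₂ : Subgroup G) : CC H K₁ → CC H K₂ → CC H (K₁ ⊓ K₂)

/-- The group topology with neighbourhood base at `1` the subgroups in `CC H`. -/
def tauAux (H : Subgroup G) : TopologicalSpace G where
  IsOpen U := ∀ x ∈ U, ∃ K : Subgroup G, CC H K ∧ ∀ k ∈ K, x * k ∈ U
  isOpen_univ := fun _ _ => ⟨H, CC.base, fun _ _ => trivial⟩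
  isOpen_inter := by
    intro U V hU hV x hx
    obtain ⟨K₁, c₁, h₁⟩ := hU x hx.1
    obtain ⟨K₂, c₂, h₂⟩ := hV x hx.2
    exact ⟨K₁ ⊓ K₂, CC.inter _ _ c₁ c₂, fun k hk => ⟨h₁ k hk.1, h₂ k hk.2⟩⟩
  isOpen_sUnion := by
    intro S hS x hx
    obtain ⟨U, hU, hxU⟩ := hx
    obtain ⟨K, c, h⟩ := hS U hU x hxU
    exact ⟨K, c, fun k hk => ⟨U, hU, h k hk⟩⟩

lemma tauAux_isOpen_iff {H : Subgroup G} {U : Set G} :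
    (tauAux H).IsOpen U ↔ ∀ x ∈ U, ∃ K : Subgroup G, CC H K ∧ ∀ k ∈ K, x * k ∈ U := Iff.rfl

lemma tauAux_isOpen_coset (H : Subgroup G) {K : Subgroup G} (hK : CC H K) (x : G) :
    (tauAux H).IsOpen {y | x⁻¹ * y ∈ K} := by
  intro y hy
  refine ⟨K, hK, fun k hk => ?_⟩
  have : x⁻¹ * (y * k) = (x⁻¹ * y) * k := by group
  simpa [Set.mem_setOf_eq, this] using K.mul_mem hy hk

lemma tauAux_isOpen_H (H : Subgroup G) : (tauAux H).IsOpen (H : Set G) :=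
  fun x hx => ⟨H, CC.base, fun k hk => H.mul_mem hx hk⟩

lemma CC_isOpen {t : TopologicalSpace G} (hq : IsQuasiTopologicalGroup t)
    {H : Subgroup G} (hH : t.IsOpen (H : Set G)) {K : Subgroup G} (hK : CC H K) :
    t.IsOpen (K : Set G) := by
  induction hK with
  | base => exact hH
  | conj g K _ ih =>
      have hc : @Continuous G G t t (fun x => g⁻¹ * x * g) :=
        Continuous.comp (hq.2.2 g) (hq.2.1 g⁻¹)
      have := @IsOpen.preimage G G t t _ hc _ ih
      exact this
  | inter K₁ K₂ _ _ ih₁ ih₂ => exact t.isOpen_inter _ _ ih₁ ih₂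

lemma t_le_tauAux {t : TopologicalSpace G} (hq : IsQuasiTopologicalGroup t)
    {H : Subgroup G} (hH : t.IsOpen (H : Set G)) : t ≤ tauAux H := by
  rw [TopologicalSpace.le_def]
  intro U hU
  have key : U = ⋃₀ {V | t.IsOpen V ∧ V ⊆ U} := by
    apply Set.Subset.antisymm
    · intro x hx
      obtain ⟨K, cK, hK⟩ := hU x hx
      refine ⟨{y | x⁻¹ * y ∈ K}, ⟨?_, ?_⟩, by simp [K.one_mem]⟩
      · exact @IsOpen.preimage G G t t _ (hq.2.1 x⁻¹) _ (CC_isOpen hq hH cK)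
      · intro y hy
        have : y = x * (x⁻¹ * y) := by group
        rw [this]; exact hK _ hy
    · rintro x ⟨V, ⟨_, hVU⟩, hxV⟩; exact hVU hxV
  rw [key]
  exact t.isOpen_sUnion _ (fun V hV => hV.1)

lemma tauAux_topologicalGroup (H : Subgroup G) :
    @IsTopologicalGroup G (tauAux H) _ := by
  letI := tauAux H
  refine { continuous_mul := ?_, continuous_inv := ?_ }
  · rw [continuous_def]
    intro U hU
    rw [isOpen_prod_iff]
    intro x y hxy
    obtain ⟨K, cK, hK⟩ := hU (x * y) hxy
    refine ⟨{z | x⁻¹ * z ∈ conjSub y K}, {z | y⁻¹ * z ∈ K},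
      tauAux_isOpen_coset H (CC.conj y K cK) x, tauAux_isOpen_coset H cK y,
      by simpa using (conjSub y K).one_mem, by simpa using K.one_mem, ?_⟩
    rintro ⟨a, b⟩ ⟨ha, hb⟩
    have ha' : y⁻¹ * (x⁻¹ * a) * y ∈ K := ha
    have hb' : y⁻¹ * b ∈ K := hb
    have hmem : (y⁻¹ * (x⁻¹ * a) * y) * (y⁻¹ * b) ∈ K := K.mul_mem ha' hb'
    have : a * b = (x * y) * ((y⁻¹ * (x⁻¹ * a) * y) * (y⁻¹ * b)) := by group
    show a * b ∈ U
    rw [this]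
    exact hK _ hmem
  · rw [continuous_def]
    intro U hU
    intro x hx
    have hx' : x⁻¹ ∈ U := hx
    obtain ⟨K, cK, hK⟩ := hU x⁻¹ hx'
    refine ⟨conjSub x⁻¹ K, CC.conj x⁻¹ K cK, fun k hk => ?_⟩
    have hk' : x * k * x⁻¹ ∈ K := by simpa [mem_conjSub] using hk
    have hk'' : x * k⁻¹ * x⁻¹ ∈ K := by
      have : x * k⁻¹ * x⁻¹ = (x * k * x⁻¹)⁻¹ := by group
      rw [this]; exact K.inv_mem hk'
    have : (x * k)⁻¹ = x⁻¹ * (x * k⁻¹ * x⁻¹) := by group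
    show (x * k)⁻¹ ∈ U
    rw [this]
    exact hK _ hk''

end Aux

/-- A quasitopological group `G` and `τ(G)` have the same open subgroups. -/
theorem tau_same_open_subgroups {G : Type*} [Group G]
    (t τ : TopologicalSpace G) (hq : IsQuasiTopologicalGroup t) (hτ : IsTau t τ)
    (H : Subgroup G) :
    t.IsOpen (H : Set G) ↔ τ.IsOpen (H : Set G) := by
  constructor
  · intro hH
    have hle : τ ≤ tauAux H :=
      hτ.2.2 (tauAux H) (t_le_tauAux hq hH) (tauAux_topologicalGroup H)
    exact (TopologicalSpace.le_def.mp hle) _ (tauAux_isOpen_H H)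
  · intro hH
    exact (TopologicalSpace.le_def.mp hτ.1) _ hH
end

section
/- For any based topological space (X, x₀), the fundamental group π₁(X, x₀) equipped with the quotient topology from the loop space Ω(X, x₀) (with the compact-open topology) is a quasitopological group: inversion and all left and right translations are continuous. -/
/-- The natural map from the loop space (with the compact-open topology) to the
fundamental group, sending a loop to its path-homotopy class. -/
noncomputable def piMk {X : Type*} [TopologicalSpace X] (x : X) (γ : Path x x) :
    FundamentalGroup X x :=
  @FundamentalGroup.fromPath X _ x (Quotient.mk (Path.Homotopic.setoid x x) γ)

/-- The quotient topology on the fundamental group, coinduced from the loop space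
(with the compact-open topology): the topology of `π₁^{qtop}(X, x)`. -/
noncomputable def qTop (X : Type*) [TopologicalSpace X] (x : X) :
    TopologicalSpace (FundamentalGroup X x) :=
  TopologicalSpace.coinduced (piMk x) inferInstance

/-- `τ` is the finest group topology on `π₁(X, x)` making the natural map from the
loop space continuous: the topology of `π₁^τ(X, x)`. -/
noncomputable def IsTauPi {X : Type*} [TopologicalSpace X] (x : X)
    (τ : TopologicalSpace (FundamentalGroup X x)) : Prop :=
  @IsTopologicalGroup (FundamentalGroup X x) τ _ ∧
    @Continuous (Path x x) (FundamentalGroup X x) _ τ (piMk x) ∧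
    ∀ s : TopologicalSpace (FundamentalGroup X x),
      @IsTopologicalGroup (FundamentalGroup X x) s _ →
      @Continuous (Path x x) (FundamentalGroup X x) _ s (piMk x) → τ ≤ s

private lemma piMk_trans {X : Type*} [TopologicalSpace X] (x : X) (a b : Path x x) :
    piMk x (a.trans b) = piMk x b * piMk x a := by
  rfl

private lemma piMk_symm {X : Type*} [TopologicalSpace X] (x : X) (a : Path x x) :
    piMk x a.symm = (piMk x a)⁻¹ := by
  rfl

private lemma piMk_surj {X : Type*} [TopologicalSpace X] (x : X)
    (g : FundamentalGroup X x) : ∃ a : Path x x, piMk x a = g := by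
  obtain ⟨a, ha⟩ := Quotient.exists_rep (g : Path.Homotopic.Quotient x x)
  exact ⟨a, ha⟩

private lemma piMk_cont {X : Type*} [TopologicalSpace X] (x : X) :
    @Continuous _ _ _ (qTop X x) (piMk x) :=
  continuous_coinduced_rng

/-- `π₁^{qtop}(X, x₀)` is a quasitopological group: inversion and all left and right
translations are continuous. -/
theorem qtop_quasiTopologicalGroup {X : Type*} [TopologicalSpace X] (x : X) :
    @Continuous _ _ (qTop X x) (qTop X x) (fun g : FundamentalGroup X x => g⁻¹) ∧
      (∀ g : FundamentalGroup X x,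
        @Continuous _ _ (qTop X x) (qTop X x) (fun h : FundamentalGroup X x => g * h)) ∧
      (∀ g : FundamentalGroup X x,
        @Continuous _ _ (qTop X x) (qTop X x) (fun h : FundamentalGroup X x => h * g)) := by
  letI : TopologicalSpace (FundamentalGroup X x) := qTop X x
  have key : ∀ f : FundamentalGroup X x → FundamentalGroup X x,
      @Continuous _ _ _ (qTop X x) (f ∘ piMk x) →
      @Continuous _ _ (qTop X x) (qTop X x) f := by
    intro f hf
    rw [qTop, continuous_coinduced_dom]
    exact hf
  refine ⟨?_, ?_, ?_⟩
  · apply key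
    have h : (fun g : FundamentalGroup X x => g⁻¹) ∘ piMk x = piMk x ∘ Path.symm := by
      funext a
      exact (piMk_symm x a).symm
    rw [h]
    exact (piMk_cont x).comp Path.continuous_symm
  · intro g
    obtain ⟨a, ha⟩ := piMk_surj x g
    apply key
    have h : (fun h : FundamentalGroup X x => g * h) ∘ piMk x
        = piMk x ∘ (fun b : Path x x => b.trans a) := by
      funext b
      simp [Function.comp, piMk_trans, ha]
    rw [h]
    exact (piMk_cont x).comp (Path.continuous_trans.comp
      (continuous_id.prodMk continuous_const))
  · intro g
    obtain ⟨a, ha⟩ := piMk_surj x g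
    apply key
    have h : (fun h : FundamentalGroup X x => h * g) ∘ piMk x
        = piMk x ∘ (fun b : Path x x => a.trans b) := by
      funext b
      simp [Function.comp, piMk_trans, ha]
    rw [h]
    exact (piMk_cont x).comp (Path.continuous_trans.comp
      (continuous_const.prodMk continuous_id))
end

section
/- If γ : I → X is a path, then the map π₁^τ(X, γ(1)) → π₁^τ(X, γ(0)) sending [α] to [γ ∗ α ∗ γ⁻¹] is an isomorphism of topological groups. -/
open CategoryTheory

attribute [local instance] Path.Homotopic.setoid

section Aux

variable {X : Type*} [TopologicalSpace X]

/-- A path as a morphism in the fundamental groupoid. -/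
abbrev homOf {u v : X} (p : Path u v) :
    FundamentalGroupoid.mk u ⟶ FundamentalGroupoid.mk v := ⟦p⟧

lemma expand_trans {u v w : X} (p : Path u v) (q : Path v w) :
    homOf p ≫ homOf q = homOf (p.trans q) := by
  rw [FundamentalGroupoid.comp_eq]
  exact (Path.Homotopic.Quotient.mk_trans p q).symm

lemma homOfPath_comp_symm {x y : X} (δ : Path x y) :
    homOf δ ≫ homOf δ.symm = 𝟙 (FundamentalGroupoid.mk x) :=
  Quotient.sound ⟨(Path.Homotopy.reflTransSymm δ).symm⟩

lemma homOfPath_symm_comp {x y : X} (δ : Path x y) :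
    homOf δ.symm ≫ homOf δ = 𝟙 (FundamentalGroupoid.mk y) :=
  Quotient.sound ⟨(Path.Homotopy.reflSymmTrans δ).symm⟩

lemma piMk_hom {x : X} (α : Path x x) :
    piMk x α = homOf α := rfl

lemma equiv_apply {x y : X} (δ : Path x y) (α : Path y y) :
    FundamentalGroup.fundamentalGroupMulEquivOfPath δ.symm (piMk y α)
      = piMk x ((δ.trans α).trans δ.symm) := by
  show ((Groupoid.isoEquivHom _ _).symm (homOf δ.symm)).inv ≫ (homOf α ≫ homOf δ.symm)
      = piMk x ((δ.trans α).trans δ.symm)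
  rw [piMk_hom]
  have hinv : ((Groupoid.isoEquivHom _ _).symm (homOf δ.symm)).inv = homOf δ := by
    exact Iso.inv_ext (homOfPath_symm_comp δ)
  rw [hinv]
  simp only [← expand_trans, Category.assoc]

/-- The key continuity lemma: any group homomorphism `π₁ b → π₁ a` that is covered by a
continuous map of loop spaces is continuous from `τb` to `τa`. -/
lemma cont_aux {a b : X}
    (τa : TopologicalSpace (FundamentalGroup X a))
    (τb : TopologicalSpace (FundamentalGroup X b))
    (hga : @IsTopologicalGroup (FundamentalGroup X a) τa _)
    (hpa : @Continuous (Path a a) (FundamentalGroup X a) _ τa (piMk a))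
    (hτb : IsTauPi b τb)
    (e : FundamentalGroup X b →* FundamentalGroup X a)
    (c : Path b b → Path a a) (hc : Continuous c)
    (hcomm : ∀ α, e (piMk b α) = piMk a (c α)) :
    @Continuous _ _ τb τa e := by
  letI := τa
  haveI := hga
  rw [@continuous_iff_le_induced _ _ _ τb τa]
  refine hτb.2.2 (τa.induced e) (topologicalGroup_induced e) ?_
  rw [continuous_induced_rng]
  have h : e ∘ piMk b = piMk a ∘ c := funext hcomm
  rw [h]
  exact hpa.comp hc

lemma cont_conj {a b : X} (δ : Path a b) :
    Continuous fun α : Path b b => (δ.trans α).trans δ.symm := by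
  have h1 : Continuous fun α : Path b b => δ.trans α :=
    Path.continuous_trans.comp (continuous_const.prodMk continuous_id)
  have h2 : Continuous fun q : Path a b => q.trans δ.symm :=
    Path.continuous_trans.comp (continuous_id.prodMk continuous_const)
  exact h2.comp h1

end Aux

/-- Change of basepoint: for a path `γ` from `a` to `b`, the map
`π₁^τ(X, b) → π₁^τ(X, a)`, `[α] ↦ [γ ∗ α ∗ γ⁻¹]`, is an isomorphism of topological
groups. -/
theorem piTau_basepoint_change {X : Type*} [TopologicalSpace X] {a b : X}
    (γ : Path a b)
    (τa : TopologicalSpace (FundamentalGroup X a))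
    (τb : TopologicalSpace (FundamentalGroup X b))
    (hτa : IsTauPi a τa) (hτb : IsTauPi b τb) :
    ∃ e : FundamentalGroup X b ≃* FundamentalGroup X a,
      (∀ α : Path b b, e (piMk b α) = piMk a ((γ.trans α).trans γ.symm)) ∧
      @Continuous _ _ τb τa e ∧ @Continuous _ _ τa τb e.symm := by
  refine ⟨FundamentalGroup.fundamentalGroupMulEquivOfPath γ.symm,
    fun α => equiv_apply γ α, ?_, ?_⟩
  · exact cont_aux τa τb hτa.1 hτa.2.1 hτb
      (FundamentalGroup.fundamentalGroupMulEquivOfPath γ.symm).toMonoidHom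
      (fun α => (γ.trans α).trans γ.symm) (cont_conj γ) (fun α => equiv_apply γ α)
  · refine cont_aux τb τa hτb.1 hτb.2.1 hτa
      (FundamentalGroup.fundamentalGroupMulEquivOfPath γ.symm).symm.toMonoidHom
      (fun β => (γ.symm.trans β).trans γ.symm.symm) (cont_conj γ.symm) (fun β => ?_)
    show (FundamentalGroup.fundamentalGroupMulEquivOfPath γ.symm).symm (piMk a β)
        = piMk b ((γ.symm.trans β).trans γ.symm.symm)
    rw [MulEquiv.symm_apply_eq, equiv_apply γ]
    rw [piMk_hom, piMk_hom]
    calc homOf β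
        = (𝟙 (FundamentalGroupoid.mk a) ≫ homOf β) ≫ 𝟙 (FundamentalGroupoid.mk a) := by simp
      _ = ((homOf γ ≫ homOf γ.symm) ≫ homOf β) ≫ (homOf γ ≫ homOf γ.symm) := by
          rw [homOfPath_comp_symm γ]
      _ = (homOf γ ≫ ((homOf γ.symm ≫ homOf β) ≫ homOf γ)) ≫ homOf γ.symm := by
          simp only [Category.assoc]
      _ = homOf ((γ.trans ((γ.symm.trans β).trans γ.symm.symm)).trans γ.symm) := by
          rw [Path.symm_symm]
          simp only [expand_trans]
end

section
/- For path connected X, the following are equivalent: (1) π₁^τ(X, x₀) is discrete; (2) π₁^{qtop}(X, x₀) is discrete; (3) every null-homotopic loop α ∈ Ω(X, x₀) has an open neighborhood in Ω(X, x₀) (compact-open topology) containing only null-homotopic loops. -/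
section Aux

variable {X : Type*} [TopologicalSpace X] {x : X}

/-- `piMk` is injective on homotopy classes. -/
theorem piMk_eq_iff (β γ : Path x x) :
    piMk x β = piMk x γ ↔
      Quotient.mk (Path.Homotopic.setoid x x) β =
        Quotient.mk (Path.Homotopic.setoid x x) γ := by
  constructor
  · intro h
    exact congrArg FundamentalGroup.toPath h
  · intro h
    unfold piMk
    rw [h]

theorem homotopic_trans_symm_iff (β γ : Path x x) :
    (β.trans γ.symm).Homotopic (Path.refl x) ↔ β.Homotopic γ := by
  constructor
  · intro h
    have h1 : β.Homotopic (β.trans (Path.refl x)) := ⟨(Path.Homotopy.transRefl β).symm⟩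
    have h2 : (β.trans (Path.refl x)).Homotopic (β.trans (γ.symm.trans γ)) :=
      Path.Homotopic.hcomp (Path.Homotopic.refl β) ⟨Path.Homotopy.reflSymmTrans γ⟩
    have h3 : (β.trans (γ.symm.trans γ)).Homotopic ((β.trans γ.symm).trans γ) :=
      ⟨(Path.Homotopy.transAssoc β γ.symm γ).symm⟩
    have h4 : ((β.trans γ.symm).trans γ).Homotopic ((Path.refl x).trans γ) :=
      Path.Homotopic.hcomp h (Path.Homotopic.refl γ)
    have h5 : ((Path.refl x).trans γ).Homotopic γ := ⟨Path.Homotopy.reflTrans γ⟩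
    exact (((h1.trans h2).trans h3).trans h4).trans h5
  · intro h
    have h1 : (β.trans γ.symm).Homotopic (γ.trans γ.symm) :=
      Path.Homotopic.hcomp h (Path.Homotopic.refl γ.symm)
    have h2 : (γ.trans γ.symm).Homotopic (Path.refl x) :=
      ⟨(Path.Homotopy.reflTransSymm γ).symm⟩
    exact h1.trans h2

end Aux

/-- For path connected `X`, the following are equivalent: `π₁^τ(X, x₀)` is discrete;
`π₁^{qtop}(X, x₀)` is discrete; every null-homotopic loop has an open neighborhood in
the loop space consisting only of null-homotopic loops. -/
theorem piTau_discrete_tfae {X : Type*} [TopologicalSpace X] [PathConnectedSpace X]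
    (x : X) (τ : TopologicalSpace (FundamentalGroup X x)) (hτ : IsTauPi x τ) :
    (τ = ⊥ ↔ qTop X x = ⊥) ∧
      (qTop X x = ⊥ ↔
        ∀ α : Path x x,
          Quotient.mk (Path.Homotopic.setoid x x) α =
            Quotient.mk (Path.Homotopic.setoid x x) (Path.refl x) →
          ∃ U : Set (Path x x), IsOpen U ∧ α ∈ U ∧
            ∀ β ∈ U, Quotient.mk (Path.Homotopic.setoid x x) β =
              Quotient.mk (Path.Homotopic.setoid x x) (Path.refl x)) := by
  obtain ⟨hg, hc, hmin⟩ := hτ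
  -- qTop ≤ τ always
  have hqle : qTop X x ≤ τ := continuous_iff_coinduced_le.mp hc
  -- ⊥ is a group topology
  have hbotgrp : @IsTopologicalGroup (FundamentalGroup X x) ⊥ _ := by
    letI : TopologicalSpace (FundamentalGroup X x) := ⊥
    haveI : DiscreteTopology (FundamentalGroup X x) := ⟨rfl⟩
    exact
      { continuous_mul := continuous_of_discreteTopology
        continuous_inv := continuous_of_discreteTopology }
  constructor
  · constructor
    · intro h
      rw [h] at hqle
      exact le_bot_iff.mp hqle
    · intro h
      refine le_bot_iff.mp (hmin ⊥ hbotgrp ?_)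
      rw [continuous_iff_coinduced_le]
      exact le_of_eq h
  · constructor
    · -- qTop discrete → open neighborhoods of null-homotopic loops
      intro h α hα
      refine ⟨piMk x ⁻¹' {piMk x α}, ?_, rfl, ?_⟩
      · have hopen : @IsOpen _ (qTop X x) {piMk x α} := by
          rw [h]; trivial
        exact isOpen_coinduced.mp hopen
      · intro β hβ
        have : Quotient.mk (Path.Homotopic.setoid x x) β =
            Quotient.mk (Path.Homotopic.setoid x x) α := (piMk_eq_iff β α).mp hβ
        exact this.trans hα
    · -- open neighborhoods → qTop discrete
      intro h
      -- The set of null-homotopic loops is open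
      set N : Set (Path x x) := {β | Quotient.mk (Path.Homotopic.setoid x x) β =
          Quotient.mk (Path.Homotopic.setoid x x) (Path.refl x)} with hN
      have hNopen : IsOpen N := by
        rw [isOpen_iff_forall_mem_open]
        intro α hα
        obtain ⟨U, hUopen, hαU, hU⟩ := h α hα
        exact ⟨U, fun β hβ => hU β hβ, hUopen, hαU⟩
      -- every singleton is open in qTop
      have hsingle : ∀ c : FundamentalGroup X x, @IsOpen _ (qTop X x) {c} := by
        intro c
        obtain ⟨β₀, hβ₀⟩ := Quotient.exists_rep ((c : FundamentalGroup X x).toPath)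
        have hc : piMk x β₀ = c := by
          exact hβ₀
        rw [qTop, isOpen_coinduced]
        have hkey : piMk x ⁻¹' {c} = (fun β : Path x x => β.trans β₀.symm) ⁻¹' N := by
          ext β
          simp only [Set.mem_preimage, Set.mem_singleton_iff, hN, Set.mem_setOf_eq]
          rw [← hc, piMk_eq_iff]
          constructor
          · intro hβ
            exact Quotient.sound ((homotopic_trans_symm_iff β β₀).mpr (Quotient.exact hβ))
          · intro hβ
            exact Quotient.sound ((homotopic_trans_symm_iff β β₀).mp (Quotient.exact hβ))
        rw [hkey]
        exact hNopen.preimage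
          (Path.continuous_trans.comp (continuous_id.prodMk continuous_const))
      -- hence qTop = ⊥
      have hall : ∀ s : Set (FundamentalGroup X x), @IsOpen _ (qTop X x) s := by
        intro s
        have hs : s = ⋃ c ∈ s, {c} := by simp
        rw [hs]
        exact @isOpen_biUnion _ _ (qTop X x) _ _ fun c _ => hsingle c
      exact le_bot_iff.mp (TopologicalSpace.le_def.mpr fun s _ => hall s)
end

section
/- For any based spaces X and Y, the map φ : π₁^τ(X × Y) → π₁^τ(X) × π₁^τ(Y) induced by the projections, φ([(α, β)]) = ([α], [β]), is an isomorphism of topological groups. -/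
section Aux

attribute [local instance] Path.Homotopic.setoid

open CategoryTheory

variable {X Y : Type*} [TopologicalSpace X] [TopologicalSpace Y]

/-- Mapping a path under a continuous map is continuous in the compact-open topology. -/
theorem continuous_path_map {a b : X} {f : X → Y} (hf : Continuous f) :
    Continuous fun p : Path a b => p.map hf :=
  Path.continuous_uncurry_iff.mp (hf.comp continuous_eval)

/-- Pairing a path with the constant path is continuous. -/
theorem continuous_path_prod_refl (x : X) (y : Y) :
    Continuous fun p : Path x x => p.prod (Path.refl y) :=
  Path.continuous_uncurry_iff.mp (continuous_eval.prodMk continuous_const)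

theorem continuous_path_refl_prod (x : X) (y : Y) :
    Continuous fun p : Path y y => (Path.refl x).prod p :=
  Path.continuous_uncurry_iff.mp ((continuous_const : Continuous fun _ => x).prodMk
    continuous_eval)

theorem projLeft_comp {c₁ c₂ c₃ : X × Y} (p : Path.Homotopic.Quotient c₁ c₂)
    (q : Path.Homotopic.Quotient c₂ c₃) :
    Path.Homotopic.projLeft (p.trans q) =
      (Path.Homotopic.projLeft p).trans (Path.Homotopic.projLeft q) := by
  obtain ⟨x₁, y₁⟩ := c₁; obtain ⟨x₂, y₂⟩ := c₂; obtain ⟨x₃, y₃⟩ := c₃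
  conv_lhs => rw [← Path.Homotopic.prod_projLeft_projRight p,
    ← Path.Homotopic.prod_projLeft_projRight q]
  rw [Path.Homotopic.comp_prod_eq_prod_comp, Path.Homotopic.projLeft_prod]

theorem projRight_comp {c₁ c₂ c₃ : X × Y} (p : Path.Homotopic.Quotient c₁ c₂)
    (q : Path.Homotopic.Quotient c₂ c₃) :
    Path.Homotopic.projRight (p.trans q) =
      (Path.Homotopic.projRight p).trans (Path.Homotopic.projRight q) := by
  obtain ⟨x₁, y₁⟩ := c₁; obtain ⟨x₂, y₂⟩ := c₂; obtain ⟨x₃, y₃⟩ := c₃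
  conv_lhs => rw [← Path.Homotopic.prod_projLeft_projRight p,
    ← Path.Homotopic.prod_projLeft_projRight q]
  rw [Path.Homotopic.comp_prod_eq_prod_comp, Path.Homotopic.projRight_prod]

variable (x : X) (y : Y)

/-- The group isomorphism `π₁(X × Y) ≃* π₁(X) × π₁(Y)` induced by the projections. -/
noncomputable def piProdMulEquiv :
    FundamentalGroup (X × Y) (x, y) ≃* FundamentalGroup X x × FundamentalGroup Y y where
  toFun a := (FundamentalGroup.fromPath (X := X)
      (Path.Homotopic.projLeft (a : Path.Homotopic.Quotient (x, y) (x, y))),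
    FundamentalGroup.fromPath (X := Y)
      (Path.Homotopic.projRight (a : Path.Homotopic.Quotient (x, y) (x, y))))
  invFun q := FundamentalGroup.fromPath (X := (X × Y))
    (Path.Homotopic.prod (q.1 : Path.Homotopic.Quotient x x)
      (q.2 : Path.Homotopic.Quotient y y))
  left_inv a := (Path.Homotopic.prod_projLeft_projRight
    (a : Path.Homotopic.Quotient (x, y) (x, y)))
  right_inv q := Prod.ext
    ((Path.Homotopic.projLeft_prod (q.1 : Path.Homotopic.Quotient x x)
      (q.2 : Path.Homotopic.Quotient y y)))
    ((Path.Homotopic.projRight_prod (q.1 : Path.Homotopic.Quotient x x)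
      (q.2 : Path.Homotopic.Quotient y y)))
  map_mul' a b := Prod.ext
    ((projLeft_comp (b : Path.Homotopic.Quotient (x, y) (x, y))
      (a : Path.Homotopic.Quotient (x, y) (x, y))))
    ((projRight_comp (b : Path.Homotopic.Quotient (x, y) (x, y))
      (a : Path.Homotopic.Quotient (x, y) (x, y))))

theorem piProdMulEquiv_piMk (p : Path ((x, y) : X × Y) (x, y)) :
    piProdMulEquiv x y (piMk (x, y) p) =
      (piMk x (p.map continuous_fst), piMk y (p.map continuous_snd)) := by
  refine Prod.ext ?_ ?_
  · exact (Path.Homotopic.Quotient.mk_map p ⟨Prod.fst, continuous_fst⟩).symm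
  · exact (Path.Homotopic.Quotient.mk_map p ⟨Prod.snd, continuous_snd⟩).symm

theorem piProdMulEquiv_symm_piMk_left (p : Path x x) :
    (piProdMulEquiv x y).symm (piMk x p, 1) = piMk (x, y) (p.prod (Path.refl y)) :=
  rfl

theorem piProdMulEquiv_symm_piMk_right (p : Path y y) :
    (piProdMulEquiv x y).symm (1, piMk y p) = piMk (x, y) ((Path.refl x).prod p) :=
  rfl

end Aux

/-- The map `π₁^τ(X × Y) → π₁^τ(X) × π₁^τ(Y)` induced by the projections is an
isomorphism of topological groups. -/
theorem piTau_prod {X Y : Type*} [TopologicalSpace X] [TopologicalSpace Y]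
    (x : X) (y : Y)
    (τP : TopologicalSpace (FundamentalGroup (X × Y) (x, y)))
    (τX : TopologicalSpace (FundamentalGroup X x))
    (τY : TopologicalSpace (FundamentalGroup Y y))
    (hP : IsTauPi (x, y) τP) (hX : IsTauPi x τX) (hY : IsTauPi y τY) :
    ∃ e : FundamentalGroup (X × Y) (x, y) ≃*
        FundamentalGroup X x × FundamentalGroup Y y,
      (∀ p : Path ((x, y) : X × Y) (x, y),
        e (piMk (x, y) p) =
          (piMk x (p.map continuous_fst), piMk y (p.map continuous_snd))) ∧
      @Continuous _ _ τP (@instTopologicalSpaceProd _ _ τX τY) e ∧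
      @Continuous _ _ (@instTopologicalSpaceProd _ _ τX τY) τP e.symm := by
  obtain ⟨hPg, hPc, hPmin⟩ := hP
  obtain ⟨hXg, hXc, hXmin⟩ := hX
  obtain ⟨hYg, hYc, hYmin⟩ := hY
  refine ⟨piProdMulEquiv x y, piProdMulEquiv_piMk x y, ?_, ?_⟩
  · -- continuity of e
    letI := τX; letI := τY
    haveI := hXg; haveI := hYg
    set e := piProdMulEquiv x y
    set s : TopologicalSpace (FundamentalGroup (X × Y) (x, y)) :=
      TopologicalSpace.induced e (@instTopologicalSpaceProd _ _ τX τY) with hs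
    have hsg : @IsTopologicalGroup _ s _ := topologicalGroup_induced e.toMonoidHom
    have hsc : @Continuous _ _ _ s (piMk (x, y)) := by
      rw [hs, continuous_induced_rng]
      have : (e ∘ piMk (x, y)) = fun p : Path ((x, y) : X × Y) (x, y) =>
          (piMk x (p.map continuous_fst), piMk y (p.map continuous_snd)) :=
        funext fun p => piProdMulEquiv_piMk x y p
      rw [this]
      exact (hXc.comp (continuous_path_map continuous_fst)).prodMk
        (hYc.comp (continuous_path_map continuous_snd))
    exact continuous_iff_le_induced.mpr (hPmin s hsg hsc)
  · -- continuity of e.symm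
    letI := τX; letI := τY; letI := τP
    haveI := hPg
    set e := piProdMulEquiv x y
    have hF : Continuous fun a : FundamentalGroup X x => e.symm (a, 1) := by
      set F : FundamentalGroup X x →* FundamentalGroup (X × Y) (x, y) :=
        e.symm.toMonoidHom.comp (MonoidHom.inl _ _) with hFdef
      set sX : TopologicalSpace (FundamentalGroup X x) := TopologicalSpace.induced F τP
        with hsX
      have hsg : @IsTopologicalGroup _ sX _ := topologicalGroup_induced F
      have hsc : @Continuous _ _ _ sX (piMk x) := by
        rw [hsX, continuous_induced_rng]
        have : (F ∘ piMk x) = fun p : Path x x => piMk (x, y) (p.prod (Path.refl y)) :=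
          funext fun p => piProdMulEquiv_symm_piMk_left x y p
        rw [this]
        exact hPc.comp (continuous_path_prod_refl x y)
      exact continuous_iff_le_induced.mpr (hXmin sX hsg hsc)
    have hG : Continuous fun b : FundamentalGroup Y y => e.symm (1, b) := by
      set G : FundamentalGroup Y y →* FundamentalGroup (X × Y) (x, y) :=
        e.symm.toMonoidHom.comp (MonoidHom.inr _ _) with hGdef
      set sY : TopologicalSpace (FundamentalGroup Y y) := TopologicalSpace.induced G τP
        with hsY
      have hsg : @IsTopologicalGroup _ sY _ := topologicalGroup_induced G
      have hsc : @Continuous _ _ _ sY (piMk y) := by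
        rw [hsY, continuous_induced_rng]
        have : (G ∘ piMk y) = fun p : Path y y => piMk (x, y) ((Path.refl x).prod p) :=
          funext fun p => piProdMulEquiv_symm_piMk_right x y p
        rw [this]
        exact hPc.comp (continuous_path_refl_prod x y)
      exact continuous_iff_le_induced.mpr (hYmin sY hsg hsc)
    have key : ∀ q : FundamentalGroup X x × FundamentalGroup Y y,
        e.symm q = e.symm (q.1, 1) * e.symm (1, q.2) := by
      intro q
      rw [← map_mul]
      congr 1
      ext <;> simp
    have : (e.symm : FundamentalGroup X x × FundamentalGroup Y y →
        FundamentalGroup (X × Y) (x, y)) =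
        fun q => e.symm (q.1, 1) * e.symm (1, q.2) := funext key
    rw [this]
    exact (hF.comp continuous_fst).mul (hG.comp continuous_snd)
end

section
/- If X is path connected and π₁^τ(X, x₀) is Hausdorff for every choice of basepoint, then X is homotopically path-Hausdorff: for any two paths α, β with the same endpoints that are not homotopic rel endpoints, there is a partition 0 = t₀ < ⋯ < t_k = 1 and open sets U₁, …, U_k with α([t_{i−1}, t_i]) ⊆ U_i such that every path γ with γ(t_i) = α(t_i) and γ([t_{i−1}, t_i]) ⊆ U_i is not homotopic to β rel endpoints. -/
open CategoryTheory

attribute [local instance] Path.Homotopic.setoid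

lemma piMk_eq_one_iff {X : Type*} [TopologicalSpace X] {a b : X} (γ β : Path a b) :
    piMk a (γ.trans β.symm) = 1 ↔ γ.Homotopic β := by
  have h1 : (piMk a (γ.trans β.symm) = 1) ↔
      (⟦γ.trans β.symm⟧ : Path.Homotopic.Quotient a a) = ⟦Path.refl a⟧ :=
    ⟨fun h => h, fun h => h⟩
  rw [h1]
  set P : FundamentalGroupoid.mk a ⟶ FundamentalGroupoid.mk b :=
    (⟦γ⟧ : Path.Homotopic.Quotient a b) with hP
  set Q : FundamentalGroupoid.mk a ⟶ FundamentalGroupoid.mk b :=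
    (⟦β⟧ : Path.Homotopic.Quotient a b) with hQ
  have hcomp : (⟦γ.trans β.symm⟧ : Path.Homotopic.Quotient a a)
      = P ≫ Groupoid.inv Q := rfl
  have hid : (⟦Path.refl a⟧ : Path.Homotopic.Quotient a a) = 𝟙 (FundamentalGroupoid.mk a) := rfl
  rw [hcomp, hid]
  constructor
  · intro h'
    have := congrArg (fun f => f ≫ Q) h'
    simp only [Category.assoc, Groupoid.inv_comp, Category.comp_id, Category.id_comp] at this
    exact Quotient.exact this
  · intro h
    have hq : P = Q := Quotient.sound h
    rw [hq, Groupoid.comp_inv]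


open Set Topology unitInterval

lemma exists_div_le (n : ℕ) (hn : 0 < n) {r : ℝ} (h0 : 0 ≤ r) (h1 : r ≤ 1) :
    ∃ i : Fin n, (i : ℝ) / n ≤ r ∧ r ≤ ((i : ℝ) + 1) / n := by
  have hnR : (0 : ℝ) < n := by exact_mod_cast hn
  by_cases hfloor : ⌊r * n⌋₊ ≤ n - 1
  · refine ⟨⟨⌊r * n⌋₊, lt_of_le_of_lt hfloor (Nat.sub_lt hn one_pos)⟩, ?_, ?_⟩
    · rw [div_le_iff₀ hnR]
      exact_mod_cast Nat.floor_le (by positivity)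
    · rw [le_div_iff₀ hnR]
      have := Nat.lt_floor_add_one (r * n)
      push_cast
      linarith
  · have hge : (n : ℝ) ≤ r * n := by
      have h2 : n ≤ ⌊r * n⌋₊ := by omega
      calc (n : ℝ) ≤ (⌊r * n⌋₊ : ℝ) := by exact_mod_cast h2
        _ ≤ r * n := Nat.floor_le (by positivity)
    have hr1 : r = 1 := by nlinarith
    refine ⟨⟨n - 1, Nat.sub_lt hn one_pos⟩, ?_, ?_⟩
    · have h3 : ((n - 1 : ℕ) : ℝ) ≤ n := by
        have : (n - 1 : ℕ) ≤ n := Nat.sub_le n 1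
        exact_mod_cast this
      rw [hr1]
      show ((n - 1 : ℕ) : ℝ) / n ≤ 1
      rw [div_le_one hnR]
      exact h3
    · have hcast : ((n - 1 : ℕ) : ℝ) + 1 = n := by
        have : (n - 1) + 1 = n := Nat.succ_pred_eq_of_pos hn
        exact_mod_cast this
      rw [hr1]
      show (1:ℝ) ≤ (((n - 1 : ℕ) : ℝ) + 1) / n
      rw [hcast, div_self (ne_of_gt hnR)]

lemma exists_partition_of_isOpen {X : Type*} [TopologicalSpace X] {a b : X}
    (α : Path a b) {W : Set (Path a b)} (hW : IsOpen W) (hα : α ∈ W) :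
    ∃ (n : ℕ) (t : Fin (n + 1) → unitInterval) (U : Fin n → Set X),
      StrictMono t ∧ t 0 = 0 ∧ t (Fin.last n) = 1 ∧
      (∀ i : Fin n, IsOpen (U i)) ∧
      (∀ i : Fin n, (⇑α) '' Set.Icc (t i.castSucc) (t i.succ) ⊆ U i) ∧
      ∀ γ : Path a b, (∀ i : Fin n, (⇑γ) '' Set.Icc (t i.castSucc) (t i.succ) ⊆ U i) → γ ∈ W := by
  obtain ⟨W', hW', hWeq⟩ := isOpen_induced_iff.mp hW
  have hα' : (α : C(I, X)) ∈ W' := by rw [← hWeq] at hα; exact hα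
  have hb := TopologicalSpace.isTopologicalBasis_of_subbasis
    (ContinuousMap.compactOpen_eq (X := I) (Y := X))
  obtain ⟨B, hBmem, hαB, hBW⟩ := hb.exists_subset_of_mem_open hα' hW'
  obtain ⟨S, ⟨hSfin, hSsub⟩, rfl⟩ := hBmem
  haveI : Finite S := hSfin.to_subtype
  have hchoice : ∀ m : S, ∃ (K : Set I) (U : Set X), IsCompact K ∧ IsOpen U ∧
      (m : Set C(I, X)) = {f : C(I, X) | Set.MapsTo ⇑f K U} := by
    rintro ⟨m, hm⟩
    obtain ⟨K, hK, U, hU, hmeq⟩ := hSsub hm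
    exact ⟨K, U, hK, hU, hmeq.symm⟩
  choose K U hK hU hmeq using hchoice
  set O : I → Set X := fun s => ⋂ (i : S) (_ : s ∈ K i), U i with hO
  have hO_open : ∀ s, IsOpen (O s) := fun s =>
    isOpen_iInter_of_finite fun i => isOpen_iInter_of_finite fun _ => hU i
  have hαO : ∀ s : I, α s ∈ O s := by
    intro s
    refine Set.mem_iInter₂.mpr fun i hs => ?_
    have := Set.mem_sInter.mp hαB i.1 i.2
    rw [hmeq i] at this
    exact this hs
  -- choose ε
  have hchoice2 : ∀ s : I, ∃ ε : ℝ, 0 < ε ∧ (∀ r : I, dist r s < ε → α r ∈ O s) ∧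
      (∀ i : S, s ∉ K i → ∀ r : I, dist r s < 2 * ε → r ∉ K i) := by
    intro s
    -- continuity part
    have h1 : α ⁻¹' (O s) ∈ nhds s :=
      α.continuous.continuousAt.preimage_mem_nhds ((hO_open s).mem_nhds (hαO s))
    obtain ⟨ε₁, hε₁, hball₁⟩ := Metric.mem_nhds_iff.mp h1
    -- closed set part
    set A : Set I := ⋃ (i : S) (_ : s ∉ K i), K i with hA
    have hA_closed : IsClosed A :=
      isClosed_iUnion_of_finite fun i => isClosed_iUnion_of_finite fun _ => (hK i).isClosed
    have hsA : s ∉ A := by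
      intro hs
      obtain ⟨i, hi, hsi⟩ := Set.mem_iUnion₂.mp hs
      exact hi hsi
    have h2 : Aᶜ ∈ nhds s := hA_closed.isOpen_compl.mem_nhds hsA
    obtain ⟨ε₂, hε₂, hball₂⟩ := Metric.mem_nhds_iff.mp h2
    refine ⟨min ε₁ (ε₂ / 2), by positivity, fun r hr => ?_, fun i hi r hr => ?_⟩
    · exact hball₁ (Metric.mem_ball.mpr (lt_of_lt_of_le hr (min_le_left _ _)))
    · intro hrK
      have : dist r s < ε₂ := by
        have := min_le_right ε₁ (ε₂ / 2)
        linarith [hr, mul_le_mul_of_nonneg_left this (by norm_num : (0:ℝ) ≤ 2)]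
      have : r ∈ Aᶜ := hball₂ (Metric.mem_ball.mpr this)
      exact this (Set.mem_iUnion₂.mpr ⟨i, hi, hrK⟩)
  choose ε hεpos hεO hεK using hchoice2
  -- Lebesgue number
  have hcov : (univ : Set I) ⊆ ⋃ s : I, Metric.ball s (ε s) := fun r _ =>
    Set.mem_iUnion.mpr ⟨r, Metric.mem_ball_self (hεpos r)⟩
  obtain ⟨δ, hδpos, hLeb⟩ := lebesgue_number_lemma_of_metric isCompact_univ
    (fun s => Metric.isOpen_ball) hcov
  obtain ⟨N, hN⟩ := exists_nat_one_div_lt hδpos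
  set n : ℕ := N + 1 with hn
  have hnpos : 0 < n := Nat.succ_pos N
  have hnR : (0 : ℝ) < n := by exact_mod_cast hnpos
  -- the partition
  set t : Fin (n + 1) → I := fun j => ⟨(j : ℝ) / n, by
    constructor
    · positivity
    · rw [div_le_one hnR]
      exact_mod_cast Fin.is_le j⟩ with ht
  have htmono : StrictMono t := by
    intro j j' hj
    show ((j : ℝ) / n) < (j' : ℝ) / n
    gcongr
    exact_mod_cast hj
  have ht0 : t 0 = 0 := by
    apply Subtype.ext
    show ((0 : Fin (n+1)) : ℝ) / n = 0
    simp
  have htlast : t (Fin.last n) = 1 := by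
    apply Subtype.ext
    show ((Fin.last n : Fin (n+1)) : ℝ) / n = 1
    simp [Fin.val_last, div_self (ne_of_gt hnR)]
  -- choose Lebesgue centers
  have hscex : ∀ i : Fin n, ∃ s : I, Metric.ball (t i.castSucc) δ ⊆ Metric.ball s (ε s) :=
    fun i => hLeb _ (Set.mem_univ _)
  choose sc hsc using hscex
  -- intervals sit inside the δ-balls
  have hIcc : ∀ i : Fin n, Set.Icc (t i.castSucc) (t i.succ) ⊆ Metric.ball (t i.castSucc) δ := by
    intro i r hr
    have hr1 : ((i : ℝ) / n : ℝ) ≤ (r : ℝ) := by exact_mod_cast hr.1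
    have hr2 : (r : ℝ) ≤ ((i : ℝ) + 1) / n := by
      have := hr.2
      have h2 : (r : ℝ) ≤ ((i.succ : ℝ) / n) := by exact_mod_cast this
      rwa [Fin.val_succ, Nat.cast_add, Nat.cast_one] at h2
    rw [Metric.mem_ball, Subtype.dist_eq, Real.dist_eq]
    have hd : |(r : ℝ) - (i : ℝ) / n| ≤ 1 / n := by
      rw [abs_le]
      constructor
      · have : (0:ℝ) < 1 / n := by positivity
        linarith
      · have : ((i : ℝ) + 1) / n - (i : ℝ) / n = 1 / n := by ring
        linarith
    have hδn : (1 : ℝ) / n < δ := by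
      rw [hn]
      push_cast
      exact_mod_cast hN
    calc |(r : ℝ) - ((i.castSucc : ℝ) / n)| = |(r : ℝ) - (i : ℝ) / n| := by
          rw [Fin.coe_castSucc]
      _ ≤ 1 / n := hd
      _ < δ := hδn
  refine ⟨n, t, fun i => O (sc i), htmono, ht0, htlast, fun i => hO_open (sc i), ?_, ?_⟩
  · intro i x hx
    obtain ⟨r, hr, rfl⟩ := hx
    have hrb : r ∈ Metric.ball (sc i) (ε (sc i)) := hsc i (hIcc i hr)
    exact hεO (sc i) r (Metric.mem_ball.mp hrb)
  · intro γ hγ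
    rw [← hWeq]
    refine hBW ?_
    refine Set.mem_sInter.mpr fun m hm => ?_
    show (γ : C(I, X)) ∈ ((⟨m, hm⟩ : S) : Set C(I, X))
    rw [hmeq ⟨m, hm⟩]
    intro r hrK
    obtain ⟨i, hi1, hi2⟩ := exists_div_le n hnpos r.2.1 r.2.2
    have hrIcc : r ∈ Set.Icc (t i.castSucc) (t i.succ) := by
      constructor
      · show ((i.castSucc : ℝ) / n : ℝ) ≤ (r : ℝ)
        rwa [Fin.coe_castSucc]
      · show (r : ℝ) ≤ ((i.succ : ℝ) / n)
        rw [Fin.val_succ, Nat.cast_add, Nat.cast_one]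
        exact hi2
    have hγr : γ r ∈ O (sc i) := hγ i ⟨r, hrIcc, rfl⟩
    have hsciK : sc i ∈ K ⟨m, hm⟩ := by
      by_contra hnot
      have hrb : r ∈ Metric.ball (sc i) (ε (sc i)) := hsc i (hIcc i hrIcc)
      have : dist r (sc i) < 2 * ε (sc i) := by
        have := Metric.mem_ball.mp hrb
        have hp := hεpos (sc i)
        linarith
      exact hεK (sc i) ⟨m, hm⟩ hnot r this hrK
    exact Set.mem_iInter₂.mp hγr ⟨m, hm⟩ hsciK

/-- If `X` is path connected and `π₁^τ(X, x)` is Hausdorff for every basepoint `x`,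
then `X` is homotopically path-Hausdorff. -/
theorem piTau_hausdorff_implies_homotopically_path_hausdorff
    {X : Type*} [TopologicalSpace X] [PathConnectedSpace X]
    (τ : ∀ x : X, TopologicalSpace (FundamentalGroup X x))
    (hτ : ∀ x : X, IsTauPi x (τ x))
    (hHaus : ∀ x : X, @T2Space _ (τ x)) :
    ∀ (a b : X) (α β : Path a b), ¬α.Homotopic β →
      ∃ (n : ℕ) (t : Fin (n + 1) → unitInterval) (U : Fin n → Set X),
        StrictMono t ∧ t 0 = 0 ∧ t (Fin.last n) = 1 ∧
        (∀ i : Fin n, IsOpen (U i)) ∧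
        (∀ i : Fin n, (⇑α) '' Set.Icc (t i.castSucc) (t i.succ) ⊆ U i) ∧
        ∀ γ : Path a b, (∀ j : Fin (n + 1), γ (t j) = α (t j)) →
          (∀ i : Fin n, (⇑γ) '' Set.Icc (t i.castSucc) (t i.succ) ⊆ U i) →
          ¬γ.Homotopic β := by
  intro a b α β hnot
  letI := τ a
  haveI : T2Space (FundamentalGroup X a) := hHaus a
  have hcont : Continuous (piMk a) := (hτ a).2.1
  have htrans : Continuous fun γ : Path a b => γ.trans β.symm := by
    have : Continuous fun γ : Path a b => (γ, β.symm) :=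
      continuous_id.prodMk continuous_const
    exact Path.continuous_trans.comp this
  set f : Path a b → FundamentalGroup X a := fun γ => piMk a (γ.trans β.symm) with hf
  have hfcont : Continuous f := hcont.comp htrans
  have hWopen : IsOpen (f ⁻¹' ({1}ᶜ)) := hfcont.isOpen_preimage _ isClosed_singleton.isOpen_compl
  have hαW : α ∈ f ⁻¹' ({1}ᶜ) := by
    intro h
    exact hnot ((piMk_eq_one_iff α β).mp h)
  obtain ⟨n, t, U, h1, h2, h3, h4, h5, h6⟩ := exists_partition_of_isOpen α hWopen hαW
  refine ⟨n, t, U, h1, h2, h3, h4, h5, fun γ _ hγ hhom => ?_⟩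
  exact (h6 γ hγ) ((piMk_eq_one_iff γ β).mpr hhom)
end

section
/- If a path p : I → X is such that X is locally path connected at p(0) and at p(1), then p is well-ended: for every open neighborhood 𝒰 of p in the path space P(X) (compact-open topology) there exist open neighborhoods V₀ of p(0) and V₁ of p(1) in X such that for all a ∈ V₀ and b ∈ V₁ there is a path q ∈ 𝒰 with q(0) = a and q(1) = b. Consequently, every path connected, locally path connected space is wep-connected. -/
/-- `X` is locally path connected at `x`: every neighborhood of `x` contains a path
connected neighborhood of `x`. -/
def LocallyPathConnectedAt (X : Type*) [TopologicalSpace X] (x : X) : Prop :=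
  ∀ U ∈ nhds x, ∃ V ∈ nhds x, V ⊆ U ∧ IsPathConnected V

/-- A path `p ∈ P(X) = C(I, X)` (compact-open topology) is well-ended. -/
def WellEnded {X : Type*} [TopologicalSpace X] (p : C(unitInterval, X)) : Prop :=
  ∀ 𝒰 : Set C(unitInterval, X), IsOpen 𝒰 → p ∈ 𝒰 →
    ∃ V₀ V₁ : Set X, IsOpen V₀ ∧ IsOpen V₁ ∧ p 0 ∈ V₀ ∧ p 1 ∈ V₁ ∧
      ∀ a ∈ V₀, ∀ b ∈ V₁, ∃ q ∈ 𝒰, q 0 = a ∧ q 1 = b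

open Set Filter TopologicalSpace unitInterval

/-- Any open set in the compact-open topology containing `p` contains a finite
intersection of subbasic sets containing `p`. -/
lemma exists_finite_family_co {Y Z : Type*} [TopologicalSpace Y] [TopologicalSpace Z]
    {𝒰 : Set C(Y, Z)} (h𝒰 : IsOpen 𝒰) {p : C(Y, Z)} (hp : p ∈ 𝒰) :
    ∃ (n : ℕ) (K : Fin n → Set Y) (U : Fin n → Set Z),
      (∀ i, IsCompact (K i)) ∧ (∀ i, IsOpen (U i)) ∧ (∀ i, MapsTo p (K i) (U i)) ∧
      ∀ q : C(Y, Z), (∀ i, MapsTo q (K i) (U i)) → q ∈ 𝒰 := by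
  obtain ⟨B, hB, hpB, hB𝒰⟩ :=
    ((TopologicalSpace.isTopologicalBasis_of_subbasis
      (ContinuousMap.compactOpen_eq (X := Y) (Y := Z))).isOpen_iff.mp h𝒰) p hp
  obtain ⟨S, ⟨hSfin, hSsub⟩, rfl⟩ := hB
  obtain ⟨n, f, hf⟩ := hSfin.fin_embedding
  have hmem : ∀ i : Fin n, ∃ (K : Set Y) (U : Set Z),
      IsCompact K ∧ IsOpen U ∧ (f i : Set C(Y, Z)) = {g : C(Y, Z) | MapsTo (⇑g) K U} := by
    intro i
    have : (f i : Set C(Y, Z)) ∈ S := by rw [← hf]; exact ⟨i, rfl⟩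
    obtain ⟨K, hK, U, hU, hKU⟩ := hSsub this
    exact ⟨K, U, hK, hU, hKU.symm⟩
  choose K U hK hU hKU using hmem
  refine ⟨n, K, U, hK, hU, ?_, ?_⟩
  · intro i
    have : p ∈ (f i : Set C(Y, Z)) := hpB _ (by rw [← hf]; exact ⟨i, rfl⟩)
    rwa [hKU i] at this
  · intro q hq
    refine hB𝒰 ?_
    intro s hs
    rw [← hf] at hs
    obtain ⟨i, rfl⟩ := hs
    rw [hKU i]
    exact hq i

/-- A path whose endpoints are points of local path connectedness is well-ended;
consequently every path connected, locally path connected space is wep-connected. -/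
theorem wellEnded_of_locallyPathConnectedAt {X : Type*} [TopologicalSpace X] :
    (∀ p : C(unitInterval, X),
      LocallyPathConnectedAt X (p 0) → LocallyPathConnectedAt X (p 1) → WellEnded p) ∧
    ((∀ x : X, LocallyPathConnectedAt X x) → PathConnectedSpace X →
      ∀ x y : X, ∃ p : C(unitInterval, X), p 0 = x ∧ p 1 = y ∧ WellEnded p) := by
  have main : ∀ p : C(unitInterval, X),
      LocallyPathConnectedAt X (p 0) → LocallyPathConnectedAt X (p 1) → WellEnded p := by
    intro p hp0 hp1 𝒰 h𝒰 hp𝒰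
    obtain ⟨n, K, U, hK, hU, hpKU, hfam⟩ := exists_finite_family_co h𝒰 hp𝒰
    -- W₀ : intersection of U i over i with 0 ∈ K i
    set W₀ : Set X := ⋂ i : {i : Fin n // (0 : unitInterval) ∈ K i}, U i.1 with hW₀def
    set W₁ : Set X := ⋂ i : {i : Fin n // (1 : unitInterval) ∈ K i}, U i.1 with hW₁def
    have hW₀open : IsOpen W₀ := isOpen_iInter_of_finite fun i => hU i.1
    have hW₁open : IsOpen W₁ := isOpen_iInter_of_finite fun i => hU i.1
    have hp0W : p 0 ∈ W₀ := mem_iInter.2 fun i => hpKU i.1 i.2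
    have hp1W : p 1 ∈ W₁ := mem_iInter.2 fun i => hpKU i.1 i.2
    -- the good sets near 0 and 1
    set C : Set unitInterval :=
      p ⁻¹' W₀ ∩ ⋂ i : {i : Fin n // (0 : unitInterval) ∉ K i}, (K i.1)ᶜ with hCdef
    set D : Set unitInterval :=
      p ⁻¹' W₁ ∩ ⋂ i : {i : Fin n // (1 : unitInterval) ∉ K i}, (K i.1)ᶜ with hDdef
    have hCopen : IsOpen C := (hW₀open.preimage p.continuous).inter
      (isOpen_iInter_of_finite fun i => (hK i.1).isClosed.isOpen_compl)
    have hDopen : IsOpen D := (hW₁open.preimage p.continuous).inter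
      (isOpen_iInter_of_finite fun i => (hK i.1).isClosed.isOpen_compl)
    have h0C : (0 : unitInterval) ∈ C := ⟨hp0W, mem_iInter.2 fun i => i.2⟩
    have h1D : (1 : unitInterval) ∈ D := ⟨hp1W, mem_iInter.2 fun i => i.2⟩
    obtain ⟨ε, hε, hballC⟩ := Metric.isOpen_iff.mp hCopen 0 h0C
    obtain ⟨δ, hδ, hballD⟩ := Metric.isOpen_iff.mp hDopen 1 h1D
    set e : ℝ := min (min ε δ) 1 / 4 with hedef
    have he0 : 0 < e := by positivity
    have he14 : e ≤ 1 / 4 := by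
      have : min (min ε δ) 1 ≤ 1 := min_le_right _ _
      simp only [hedef]; linarith
    have heI : e ∈ Icc (0 : ℝ) 1 := ⟨he0.le, by linarith⟩
    have h1eI : 1 - e ∈ Icc (0 : ℝ) 1 := ⟨by linarith, by linarith⟩
    -- points with small coordinate are in C
    have hsmallC : ∀ t : unitInterval, (t : ℝ) ≤ e → t ∈ C := by
      intro t ht
      apply hballC
      have : dist t (0 : unitInterval) = (t : ℝ) := by
        rw [Subtype.dist_eq, Real.dist_eq]
        simp [abs_of_nonneg t.2.1]
      rw [Metric.mem_ball, this]
      have : e < ε := by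
        have h1 : min (min ε δ) 1 ≤ ε := le_trans (min_le_left _ _) (min_le_left _ _)
        have h2 : e ≤ ε / 4 := by simp only [hedef]; linarith
        linarith
      linarith
    have hsmallD : ∀ t : unitInterval, 1 - e ≤ (t : ℝ) → t ∈ D := by
      intro t ht
      apply hballD
      have hd : dist t (1 : unitInterval) = 1 - (t : ℝ) := by
        rw [Subtype.dist_eq, Real.dist_eq]
        rw [abs_of_nonpos (by simpa using t.2.2)]
        simp
      rw [Metric.mem_ball, hd]
      have : e < δ := by
        have h1 : min (min ε δ) 1 ≤ δ := le_trans (min_le_left _ _) (min_le_right _ _)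
        have h2 : e ≤ δ / 4 := by simp only [hedef]; linarith
        linarith
      linarith
    -- local path connectedness gives path-connected neighborhoods
    obtain ⟨V, hVnhds, hVW, hVpc⟩ := hp0 W₀ (hW₀open.mem_nhds hp0W)
    obtain ⟨V', hV'nhds, hV'W, hV'pc⟩ := hp1 W₁ (hW₁open.mem_nhds hp1W)
    refine ⟨interior V, interior V', isOpen_interior, isOpen_interior,
      mem_interior_iff_mem_nhds.2 hVnhds, mem_interior_iff_mem_nhds.2 hV'nhds, ?_⟩
    intro a ha b hb
    have hjoin0 : JoinedIn V a (p 0) :=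
      hVpc.joinedIn a (interior_subset ha) (p 0) (mem_of_mem_nhds hVnhds)
    have hjoin1 : JoinedIn V' (p 1) b :=
      hV'pc.joinedIn (p 1) (mem_of_mem_nhds hV'nhds) b (interior_subset hb)
    set α : Path a (p 0) := hjoin0.somePath with hαdef
    set β : Path (p 1) b := hjoin1.somePath with hβdef
    -- segment paths of p
    have hmul_mem : ∀ t : unitInterval, e * (t : ℝ) ∈ Icc (0 : ℝ) 1 := by
      intro t
      constructor
      · exact mul_nonneg he0.le t.2.1
      · calc e * (t : ℝ) ≤ e * 1 := by
              apply mul_le_mul_of_nonneg_left t.2.2 he0.le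
          _ ≤ 1 := by linarith
    have haffine_mem : ∀ t : unitInterval, (1 - e) + e * (t : ℝ) ∈ Icc (0 : ℝ) 1 := by
      intro t
      constructor
      · have := mul_nonneg he0.le t.2.1; linarith
      · have : e * (t : ℝ) ≤ e * 1 := mul_le_mul_of_nonneg_left t.2.2 he0.le
        linarith
    set pseg : Path (p 0) (p ⟨e, heI⟩) :=
      { toFun := fun t => p ⟨e * (t : ℝ), hmul_mem t⟩
        continuous_toFun := p.continuous.comp (by fun_prop)
        source' := by simp
        target' := by simp } with hpsegdef
    set pseg' : Path (p ⟨1 - e, h1eI⟩) (p 1) :=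
      { toFun := fun t => p ⟨(1 - e) + e * (t : ℝ), haffine_mem t⟩
        continuous_toFun := p.continuous.comp (by fun_prop)
        source' := by simp
        target' := by norm_num } with hpseg'def
    set γ : Path a (p ⟨e, heI⟩) := α.trans pseg with hγdef
    set γ' : Path (p ⟨1 - e, h1eI⟩) b := pseg'.trans β with hγ'def
    have hγW : ∀ t, γ t ∈ W₀ := by
      intro t
      have : γ t ∈ range α ∪ range pseg := by
        rw [← Path.trans_range]; exact mem_range_self t
      rcases this with ⟨s, hs⟩ | ⟨s, hs⟩
      · exact hVW (hs ▸ hjoin0.somePath_mem s)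
      · rw [← hs]
        exact (hsmallC ⟨e * (s : ℝ), hmul_mem s⟩ (by
          have : e * (s : ℝ) ≤ e * 1 := mul_le_mul_of_nonneg_left s.2.2 he0.le
          simpa using this.trans (by linarith))).1
    have hγ'W : ∀ t, γ' t ∈ W₁ := by
      intro t
      have : γ' t ∈ range pseg' ∪ range β := by
        rw [← Path.trans_range]; exact mem_range_self t
      rcases this with ⟨s, hs⟩ | ⟨s, hs⟩
      · rw [← hs]
        exact (hsmallD ⟨(1 - e) + e * (s : ℝ), haffine_mem s⟩ (by
          have := mul_nonneg he0.le s.2.1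
          simp only []
          linarith)).1
      · exact hV'W (hs ▸ hjoin1.somePath_mem s)
    -- the grafted path, as a function on ℝ
    set F : ℝ → X := fun s =>
      if s ≤ e then γ (projIcc 0 1 zero_le_one (s / e))
      else if s ≤ 1 - e then p (projIcc 0 1 zero_le_one s)
      else γ' (projIcc 0 1 zero_le_one ((s - (1 - e)) / e)) with hFdef
    have hG : Continuous (fun s : ℝ =>
        if s ≤ 1 - e then p (projIcc 0 1 zero_le_one s)
        else γ' (projIcc 0 1 zero_le_one ((s - (1 - e)) / e))) := by
      apply Continuous.if_le
      · exact p.continuous.comp continuous_projIcc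
      · exact γ'.continuous.comp (continuous_projIcc.comp (by fun_prop))
      · exact continuous_id
      · exact continuous_const
      · intro s hs
        subst hs
        rw [projIcc_of_mem zero_le_one h1eI]
        have : ((1 : ℝ) - e - (1 - e)) / e = 0 := by
          field_simp
          ring
        rw [this, projIcc_of_mem zero_le_one (by norm_num : (0:ℝ) ∈ Icc (0:ℝ) 1)]
        have : γ' ⟨0, by norm_num⟩ = γ' 0 := rfl
        rw [this, γ'.source]
    have hF : Continuous F := by
      rw [hFdef]
      apply Continuous.if_le
      · exact γ.continuous.comp (continuous_projIcc.comp (by fun_prop))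
      · exact hG
      · exact continuous_id
      · exact continuous_const
      · intro s hs
        subst hs
        have he1 : e / e = 1 := div_self he0.ne'
        rw [he1, projIcc_of_mem zero_le_one (by norm_num : (1:ℝ) ∈ Icc (0:ℝ) 1)]
        have h2 : e ≤ 1 - e := by linarith
        rw [if_pos h2, projIcc_of_mem zero_le_one heI]
        have : γ ⟨1, by norm_num⟩ = γ 1 := rfl
        rw [this, γ.target]
    set q : C(unitInterval, X) := ⟨fun t => F (t : ℝ), hF.comp continuous_subtype_val⟩
      with hqdef
    have hq0 : q 0 = a := by
      show F ((0 : unitInterval) : ℝ) = a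
      simp only [hFdef, Set.Icc.coe_zero]
      simp only [if_pos (le_of_lt he0), zero_div]
      rw [projIcc_of_mem zero_le_one (by norm_num : (0:ℝ) ∈ Icc (0:ℝ) 1)]
      have : γ ⟨0, by norm_num⟩ = γ 0 := rfl
      rw [this, γ.source]
    have hq1 : q 1 = b := by
      show F ((1 : unitInterval) : ℝ) = b
      simp only [hFdef, Set.Icc.coe_one]
      rw [if_neg (by linarith : ¬ (1 : ℝ) ≤ e), if_neg (by linarith : ¬ (1 : ℝ) ≤ 1 - e)]
      have : ((1 : ℝ) - (1 - e)) / e = 1 := by field_simp; ring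
      rw [this, projIcc_of_mem zero_le_one (by norm_num : (1:ℝ) ∈ Icc (0:ℝ) 1)]
      have : γ' ⟨1, by norm_num⟩ = γ' 1 := rfl
      rw [this, γ'.target]
    refine ⟨q, ?_, hq0, hq1⟩
    apply hfam
    intro i t ht
    show F (t : ℝ) ∈ U i
    simp only [hFdef]
    by_cases h1 : (t : ℝ) ≤ e
    · rw [if_pos h1]
      have h0Ki : (0 : unitInterval) ∈ K i := by
        by_contra h0
        exact (mem_iInter.1 (hsmallC t h1).2) ⟨i, h0⟩ ht
      exact mem_iInter.1 (hγW _) ⟨i, h0Ki⟩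
    · rw [if_neg h1]
      by_cases h2 : (t : ℝ) ≤ 1 - e
      · rw [if_pos h2, projIcc_of_mem zero_le_one t.2]
        exact hpKU i ht
      · rw [if_neg h2]
        have h1Ki : (1 : unitInterval) ∈ K i := by
          by_contra hone
          exact (mem_iInter.1 (hsmallD t (by linarith)).2) ⟨i, hone⟩ ht
        exact mem_iInter.1 (hγ'W _) ⟨i, h1Ki⟩
  refine ⟨main, ?_⟩
  intro hlpc hpcs x y
  obtain ⟨γ⟩ := PathConnectedSpace.joined x y
  refine ⟨γ.toContinuousMap, by simp, by simp, ?_⟩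
  apply main <;> exact hlpc _
end
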